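/- For any parameters f ∈ (0,1) and κ, γ₁, γ₂, γ₃ > 0, the ZIP regulatory system has exactly one steady state in S = [0,1]⁴: there exists a unique u* ∈ [0,1]⁴ with F(u*) = 0. -/

import Mathlib

set_option maxHeartbeats 1000000

/-- The ZIP regulatory vector field on ℝ⁴ (components indexed by `Fin 4`). -/
noncomputable def zipField (κ γ₁ γ₂ γ₃ f : ℝ) (u : Fin 4 → ℝ) : Fin 4 → ℝ :=
  ![κ * (u 2) ^ 2 * (1 - u 0) - u 0,
    u 0 * f - u 1,
    1 - γ₁ * u 2 * u 3 - u 2,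
    γ₂ * u 1 - γ₃ * u 2 * u 3 - (1 + γ₂ * u 1) * u 3]

/-- Two steady states of the ZIP system in the cube with strictly ordered third
coordinates yield a contradiction. -/
lemma zip_aux_false (κ γ₁ γ₂ γ₃ f : ℝ) (hκ : 0 < κ) (hγ₁ : 0 < γ₁) (hγ₂ : 0 < γ₂)
    (hγ₃ : 0 < γ₃) (hf : 0 < f)
    (a₁ b₁ c₁ d₁ a₂ b₂ c₂ d₂ : ℝ)
    (hd₁0 : 0 ≤ d₁) (hd₁1 : d₁ ≤ 1) (hd₂0 : 0 ≤ d₂)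
    (ha₁0 : 0 ≤ a₁)
    (e01 : κ * c₁ ^ 2 * (1 - a₁) - a₁ = 0) (e11 : a₁ * f - b₁ = 0)
    (e21 : 1 - γ₁ * c₁ * d₁ - c₁ = 0) (e31 : γ₂ * b₁ - γ₃ * c₁ * d₁ - (1 + γ₂ * b₁) * d₁ = 0)
    (e02 : κ * c₂ ^ 2 * (1 - a₂) - a₂ = 0) (e12 : a₂ * f - b₂ = 0)
    (e22 : 1 - γ₁ * c₂ * d₂ - c₂ = 0) (e32 : γ₂ * b₂ - γ₃ * c₂ * d₂ - (1 + γ₂ * b₂) * d₂ = 0)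
    (hlt : c₁ < c₂) : False := by
  have hc₁pos : 0 < c₁ := by
    by_contra h
    push_neg at h
    nlinarith [mul_nonneg (mul_nonneg hγ₁.le hd₁0) (neg_nonneg.2 h)]
  have hc₂pos : 0 < c₂ := lt_trans hc₁pos hlt
  have hd1 : γ₁ * c₁ * d₁ = 1 - c₁ := by linarith
  have hd2 : γ₁ * c₂ * d₂ = 1 - c₂ := by linarith
  have hprod : 0 < γ₁ * c₁ * c₂ := mul_pos (mul_pos hγ₁ hc₁pos) hc₂pos
  have hkey1 : (d₁ - d₂) * (γ₁ * c₁ * c₂) = c₂ - c₁ := by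
    linear_combination c₂ * hd1 - c₁ * hd2
  have hdlt : d₂ < d₁ := by
    by_contra h
    push_neg at h
    nlinarith [mul_nonneg (sub_nonneg.2 h) hprod.le]
  have ha1 : a₁ * (1 + κ * c₁ ^ 2) = κ * c₁ ^ 2 := by linear_combination -e01
  have ha2 : a₂ * (1 + κ * c₂ ^ 2) = κ * c₂ ^ 2 := by linear_combination -e02
  have ha₂pos : 0 < a₂ := by nlinarith [mul_pos hκ (pow_pos hc₂pos 2), sq_nonneg c₂]
  have hfac : (0:ℝ) < (1 + κ * c₁ ^ 2) * (1 + κ * c₂ ^ 2) := by positivity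
  have hamono : a₁ ≤ a₂ := by
    have h : (a₂ - a₁) * ((1 + κ * c₁ ^ 2) * (1 + κ * c₂ ^ 2)) = κ * (c₂ ^ 2 - c₁ ^ 2) := by
      linear_combination (1 + κ * c₁ ^ 2) * ha2 - (1 + κ * c₂ ^ 2) * ha1
    have hsq : κ * (c₂ ^ 2 - c₁ ^ 2) ≥ 0 := by
      nlinarith [mul_nonneg (mul_nonneg hκ.le (by linarith : (0:ℝ) ≤ c₁ + c₂))
        (sub_pos.2 hlt).le]
    by_contra hcon
    push_neg at hcon
    nlinarith [mul_pos (sub_pos.2 hcon) hfac]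
  have key1 : γ₂ * f * a₁ * (1 - d₁) = d₁ * (1 + γ₃ * c₁) := by
    linear_combination e31 + γ₂ * (1 - d₁) * e11
  have key2 : γ₂ * f * a₂ * (1 - d₂) = d₂ * (1 + γ₃ * c₂) := by
    linear_combination e32 + γ₂ * (1 - d₂) * e12
  have hRHS : d₂ * (1 + γ₃ * c₂) < d₁ * (1 + γ₃ * c₁) := by
    have h : (d₁ * (1 + γ₃ * c₁) - d₂ * (1 + γ₃ * c₂)) * (γ₁ * c₁ * c₂)
        = (c₂ - c₁) * (1 + γ₃ * c₁ * c₂) := by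
      linear_combination ((1 + γ₃ * c₁) * c₂) * hd1 - ((1 + γ₃ * c₂) * c₁) * hd2
    have hp1 : (0:ℝ) < 1 + γ₃ * c₁ * c₂ := by
      have := mul_pos (mul_pos hγ₃ hc₁pos) hc₂pos
      linarith
    have hp2 : 0 < (c₂ - c₁) * (1 + γ₃ * c₁ * c₂) := mul_pos (sub_pos.2 hlt) hp1
    by_contra hcon
    push_neg at hcon
    nlinarith [mul_nonneg (sub_nonneg.2 hcon) hprod.le]
  have hLHS : γ₂ * f * a₁ * (1 - d₁) < γ₂ * f * a₂ * (1 - d₂) := by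
    have h1 : a₁ * (1 - d₁) < a₂ * (1 - d₂) := by
      nlinarith [mul_pos ha₂pos (sub_pos.2 hdlt),
        mul_nonneg (sub_nonneg.2 hamono) (sub_nonneg.2 hd₁1)]
    have h2 : 0 < γ₂ * f := mul_pos hγ₂ hf
    nlinarith [mul_pos h2 (sub_pos.2 h1)]
  linarith

/-- the ZIP regulatory system has exactly one steady state in
the cube S = [0,1]⁴. -/
theorem zip_unique_steady_state
    (κ γ₁ γ₂ γ₃ f : ℝ) (hκ : 0 < κ) (hγ₁ : 0 < γ₁) (hγ₂ : 0 < γ₂) (hγ₃ : 0 < γ₃)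
    (hf : f ∈ Set.Ioo (0 : ℝ) 1) :
    ∃! u : Fin 4 → ℝ, (∀ i, u i ∈ Set.Icc (0 : ℝ) 1) ∧ zipField κ γ₁ γ₂ γ₃ f u = 0 := by
  obtain ⟨hf0, hf1⟩ := hf
  -- existence via IVT on a polynomial in the third coordinate
  set H : ℝ → ℝ := fun w =>
    γ₂ * f * κ * w ^ 2 * ((1 + γ₁) * w - 1) - (1 - w) * (1 + γ₃ * w) * (1 + κ * w ^ 2) with hH
  have hcont : Continuous H := by fun_prop
  set a : ℝ := (1 + γ₁)⁻¹ with haa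
  have hγ₁1 : (0:ℝ) < 1 + γ₁ := by linarith
  have ha0 : 0 < a := by positivity
  have h1a : (1 + γ₁) * a = 1 := mul_inv_cancel₀ (ne_of_gt hγ₁1)
  have halt1 : a < 1 := by nlinarith
  have ha1 : a ≤ 1 := halt1.le
  have hHa : H a < 0 := by
    have hq : 0 < (1 - a) * (1 + γ₃ * a) * (1 + κ * a ^ 2) := by
      have h2 : (0:ℝ) < 1 + γ₃ * a := by nlinarith [mul_pos hγ₃ ha0]
      have h3 : (0:ℝ) < 1 + κ * a ^ 2 := by positivity
      exact mul_pos (mul_pos (by linarith) h2) h3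
    have he : H a = -((1 - a) * (1 + γ₃ * a) * (1 + κ * a ^ 2)) := by
      simp only [hH]
      linear_combination (γ₂ * f * κ * a ^ 2) * h1a
    rw [he]; linarith
  have hH1 : 0 < H 1 := by
    have he : H 1 = γ₂ * f * κ * γ₁ := by simp only [hH]; ring
    rw [he]; positivity
  have hiv := intermediate_value_Icc ha1 hcont.continuousOn
  have h0mem : (0:ℝ) ∈ Set.Icc (H a) (H 1) := ⟨hHa.le, hH1.le⟩
  obtain ⟨w, hwmem, hw0⟩ := hiv h0mem
  obtain ⟨haw, hw1⟩ := hwmem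
  have hwpos : 0 < w := lt_of_lt_of_le ha0 haw
  have hw0' : γ₂ * f * κ * w ^ 2 * ((1 + γ₁) * w - 1)
      - (1 - w) * (1 + γ₃ * w) * (1 + κ * w ^ 2) = 0 := hw0
  have hden : (0:ℝ) < 1 + κ * w ^ 2 := by positivity
  have hgw : (0:ℝ) < γ₁ * w := mul_pos hγ₁ hwpos
  have hdne : (1 + κ * w ^ 2) ≠ 0 := ne_of_gt hden
  have hgne : (γ₁ * w) ≠ 0 := ne_of_gt hgw
  set uu : ℝ := κ * w ^ 2 / (1 + κ * w ^ 2) with huu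
  set vv : ℝ := uu * f with hvv
  set zz : ℝ := (1 - w) / (γ₁ * w) with hzz
  have huu0 : 0 ≤ uu := by positivity
  have huu1 : uu ≤ 1 := by
    rw [huu, div_le_one hden]; linarith
  have hvv0 : 0 ≤ vv := by positivity
  have hvv1 : vv ≤ 1 := by nlinarith
  have hzz0 : 0 ≤ zz := div_nonneg (by linarith) hgw.le
  have hzz1 : zz ≤ 1 := by
    rw [hzz, div_le_one hgw]
    nlinarith [h1a, haw]
  -- the candidate steady state satisfies the four equations
  have E0 : κ * w ^ 2 * (1 - uu) - uu = 0 := by rw [huu]; field_simp; ring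
  have E1 : uu * f - vv = 0 := by rw [hvv]; ring
  have E2 : 1 - γ₁ * w * zz - w = 0 := by rw [hzz]; field_simp; ring
  have E3 : γ₂ * vv - γ₃ * w * zz - (1 + γ₂ * vv) * zz = 0 := by
    rw [hvv, hzz, huu]
    field_simp
    linear_combination hw0'
  refine ⟨![uu, vv, w, zz], ⟨?_, ?_⟩, ?_⟩
  · intro i
    fin_cases i
    · exact ⟨huu0, huu1⟩
    · exact ⟨hvv0, hvv1⟩
    · exact ⟨hwpos.le, hw1⟩
    · exact ⟨hzz0, hzz1⟩
  · funext i
    fin_cases i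
    · show κ * w ^ 2 * (1 - uu) - uu = 0; exact E0
    · show uu * f - vv = 0; exact E1
    · show 1 - γ₁ * w * zz - w = 0; exact E2
    · show γ₂ * vv - γ₃ * w * zz - (1 + γ₂ * vv) * zz = 0; exact E3
  · -- uniqueness
    rintro y ⟨hycube, hyzero⟩
    have h0 := congrFun hyzero 0
    have h1 := congrFun hyzero 1
    have h2 := congrFun hyzero 2
    have h3 := congrFun hyzero 3
    simp only [zipField, Matrix.cons_val_zero, Matrix.cons_val_one, Matrix.head_cons,
      Matrix.cons_val_two, Matrix.tail_cons, Matrix.cons_val_three, Pi.zero_apply] at h0 h1 h2 h3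
    rcases lt_trichotomy (y 2) w with hlt | heq | hgt
    · exact (zip_aux_false κ γ₁ γ₂ γ₃ f hκ hγ₁ hγ₂ hγ₃ hf0
        (y 0) (y 1) (y 2) (y 3) uu vv w zz
        (hycube 3).1 (hycube 3).2 hzz0 (hycube 0).1
        h0 h1 h2 h3 E0 E1 E2 E3 hlt).elim
    · -- equal third coordinates force full equality
      have hdz : y 3 = zz := by
        have t1 : γ₁ * y 2 * y 3 = 1 - y 2 := by linarith
        have t2 : γ₁ * y 2 * zz = 1 - y 2 := by rw [heq]; linarith
        have hne : (γ₁ * y 2) ≠ 0 := by rw [heq]; exact hgne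
        exact mul_left_cancel₀ hne (t1.trans t2.symm)
      have hau : y 0 = uu := by
        have t1 : y 0 * (1 + κ * w ^ 2) = κ * w ^ 2 := by
          rw [← heq]; linear_combination -h0
        have t2 : uu * (1 + κ * w ^ 2) = κ * w ^ 2 := by linear_combination -E0
        exact mul_right_cancel₀ hdne (t1.trans t2.symm)
      have hbv : y 1 = vv := by
        have t : y 1 = y 0 * f := by linarith
        rw [t, hau, hvv]
      funext i
      fin_cases i
      · show y 0 = uu; exact hau
      · show y 1 = vv; exact hbv
      · show y 2 = w; exact heq
      · show y 3 = zz; exact hdz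
    · exact (zip_aux_false κ γ₁ γ₂ γ₃ f hκ hγ₁ hγ₂ hγ₃ hf0
        uu vv w zz (y 0) (y 1) (y 2) (y 3)
        hzz0 hzz1 (hycube 3).1 huu0
        E0 E1 E2 E3 h0 h1 h2 h3 hgt).elim
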